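/- Let O be a real Hilbert space, W a closed subspace of O, and P the orthogonal projection of O onto W^⊥ (kernel W). Let X⁻ be a real Banach space and ι : X⁻ → O an injective continuous linear map, and assume the composition P ∘ ι : X⁻ → O is a compact operator. For each n ∈ ℕ let X_n be a finite-dimensional subspace of X⁻, let W_n be a subspace of X_n, and let V_n = {u ∈ X_n : ⟨ιu, ιw⟩ = 0 for all w ∈ W_n}. Assume: (a) there are linear maps Q_n : O → O, uniformly bounded in operator norm, with Q_n x = x for all x ∈ ι(X_n), Q_n(range) ⊆ ι(X_n), Q_n y → y for every y ∈ O, and Q_n(W) ⊆ ι(W_n); (b) δ(ι(W_n), W) → 0 as n → ∞. Then there is a sequence ε_n → 0 such that for all n and all u ∈ V_n: ‖ιu − P(ιu)‖_O ≤ ε_n ‖u‖_{X⁻}. -/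

import Mathlib

open Filter Topology RealInnerProductSpace

/-- The gap `δ(A, B) = sup_{a ∈ A, a ≠ 0} dist(a, B) / ‖a‖` between two subsets of a
normed space (equal to `0`, by convention on `sSup ∅`, when `A ⊆ {0}`). -/
noncomputable def subspaceGap {O : Type*} [NormedAddCommGroup O] (A B : Set O) : ℝ :=
  sSup ((fun a => Metric.infDist a B / ‖a‖) '' (A \ {0}))

/-- Uniformly bounded operators converging pointwise to the identity converge
uniformly on compact sets. -/
lemma unif_conv_on_compact {O : Type*} [NormedAddCommGroup O] [NormedSpace ℝ O]
    (Q : ℕ → O →L[ℝ] O) (C : ℝ) (hC : ∀ n, ‖Q n‖ ≤ C)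
    (hconv : ∀ y : O, Tendsto (fun n => Q n y) atTop (𝓝 y))
    {K : Set O} (hK : IsCompact K) {ε : ℝ} (hε : 0 < ε) :
    ∀ᶠ n in atTop, ∀ y ∈ K, ‖y - Q n y‖ < ε := by
  have hC0 : 0 ≤ C := le_trans (norm_nonneg _) (hC 0)
  set δ : ℝ := ε / (2 * (C + 2)) with hδdef
  have hδ : 0 < δ := by positivity
  obtain ⟨t, htK, hcover⟩ := hK.elim_nhds_subcover (fun y => Metric.ball y δ)
    (fun x _ => Metric.ball_mem_nhds x hδ)
  have hev : ∀ᶠ n in atTop, ∀ i ∈ t, ‖i - Q n i‖ < ε / 2 := by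
    rw [Filter.eventually_all_finset]
    intro i _
    have h : Tendsto (fun n => i - Q n i) atTop (𝓝 0) := by
      have := (tendsto_const_nhds (x := i)).sub (hconv i)
      simpa using this
    have := (NormedAddCommGroup.tendsto_nhds_zero.mp h) (ε / 2) (by positivity)
    simpa using this
  filter_upwards [hev] with n hn y hy
  obtain ⟨i, hit, hyi⟩ := Set.mem_iUnion₂.mp (hcover hy)
  have hdist : ‖y - i‖ < δ := by
    have := Metric.mem_ball.mp hyi
    rwa [dist_eq_norm] at this
  have key : y - Q n y = ((y - i) - Q n (y - i)) + (i - Q n i) := by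
    simp [map_sub]; abel
  have hQ : ‖Q n (y - i)‖ ≤ C * ‖y - i‖ :=
    le_trans ((Q n).le_opNorm _) (by gcongr; exact hC n)
  calc ‖y - Q n y‖ ≤ ‖(y - i) - Q n (y - i)‖ + ‖i - Q n i‖ := by rw [key]; exact norm_add_le _ _
    _ ≤ (‖y - i‖ + C * ‖y - i‖) + ‖i - Q n i‖ := by
        gcongr
        exact le_trans (norm_sub_le _ _) (by gcongr)
    _ < ((1 + C) * δ) + ε / 2 := by
        have h1 : ‖y - i‖ + C * ‖y - i‖ = (1 + C) * ‖y - i‖ := by ring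
        rw [h1]
        have := hn i hit
        have h2 : (1 + C) * ‖y - i‖ ≤ (1 + C) * δ :=
          mul_le_mul_of_nonneg_left hdist.le (by positivity)
        linarith
    _ ≤ ε / 2 + ε / 2 := by
        have : (1 + C) * δ ≤ ε / 2 := by
          have h2pos : (0:ℝ) < 2 * (C + 2) := by positivity
          rw [hδdef, ← mul_div_assoc, div_le_div_iff₀ h2pos two_pos]
          nlinarith [hε.le]
        linarith
    _ = ε := by ring

/-- Gap estimate for the discrete spaces: with `P` the orthogonal
projection onto `Wᗮ` (kernel `W`), `P ∘ ι` compact, uniformly bounded projections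
`Q_n` onto `ι(X_n)` converging pointwise to the identity and mapping `W` into
`ι(W_n)`, and `δ(ι(W_n), W) → 0`, there is `ε_n → 0` with
`‖ι u − P (ι u)‖ ≤ ε_n ‖u‖` for all `u ∈ V_n`. -/
theorem stmt_1 {O Xm : Type*}
    [NormedAddCommGroup O] [InnerProductSpace ℝ O] [CompleteSpace O]
    [NormedAddCommGroup Xm] [NormedSpace ℝ Xm] [CompleteSpace Xm]
    (W : Submodule ℝ O) (hWclosed : IsClosed (W : Set O))
    (P : O →L[ℝ] O) (hP : ∀ x : O, P x ∈ Wᗮ ∧ x - P x ∈ W)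
    (ι : Xm →L[ℝ] O) (hι : Function.Injective ι)
    (hcomp : IsCompactOperator (P.comp ι))
    (Xn : ℕ → Submodule ℝ Xm) (hfd : ∀ n, FiniteDimensional ℝ (Xn n))
    (Wn : ℕ → Submodule ℝ Xm) (hWn : ∀ n, Wn n ≤ Xn n)
    (Q : ℕ → O →L[ℝ] O) (C : ℝ) (hQbdd : ∀ n, ‖Q n‖ ≤ C)
    (hQfix : ∀ n, ∀ x ∈ Submodule.map (ι : Xm →ₗ[ℝ] O) (Xn n), Q n x = x)
    (hQrange : ∀ n, ∀ y : O, Q n y ∈ Submodule.map (ι : Xm →ₗ[ℝ] O) (Xn n))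
    (hQconv : ∀ y : O, Tendsto (fun n => Q n y) atTop (𝓝 y))
    (hQW : ∀ n, ∀ w ∈ W, Q n w ∈ Submodule.map (ι : Xm →ₗ[ℝ] O) (Wn n))
    (hgap : Tendsto
      (fun n => subspaceGap ((Submodule.map (ι : Xm →ₗ[ℝ] O) (Wn n) : Set O)) (W : Set O))
      atTop (𝓝 0)) :
    ∃ ε : ℕ → ℝ, Tendsto ε atTop (𝓝 0) ∧
      ∀ n, ∀ u ∈ Xn n, (∀ w ∈ Wn n, ⟪ι u, ι w⟫ = 0) →
        ‖ι u - P (ι u)‖ ≤ ε n * ‖u‖ := by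
  obtain ⟨K, hKc, hKmem⟩ := hcomp
  obtain ⟨r, hr, hball⟩ := Metric.mem_nhds_iff.mp hKmem
  have hK0 : (0 : O) ∈ K := by
    have : (0 : Xm) ∈ Metric.ball (0 : Xm) r := Metric.mem_ball_self hr
    have := hball this
    simpa using this
  -- the sup of ‖y - Q n y‖ over K
  set M : ℕ → ℝ := fun n => sSup ((fun y => ‖y - Q n y‖) '' K) with hMdef
  have hbdd : ∀ n, BddAbove ((fun y => ‖y - Q n y‖) '' K) := fun n =>
    (hKc.image (continuous_id.sub (Q n).continuous).norm).bddAbove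
  have hM_le : ∀ n, ∀ y ∈ K, ‖y - Q n y‖ ≤ M n := fun n y hy =>
    le_csSup (hbdd n) ⟨y, hy, rfl⟩
  have hM_nonneg : ∀ n, 0 ≤ M n := fun n => by
    have := hM_le n 0 hK0
    simpa using le_trans (norm_nonneg _) this
  have hM0 : Tendsto M atTop (𝓝 0) := by
    rw [NormedAddCommGroup.tendsto_nhds_zero]
    intro ε hε
    filter_upwards [unif_conv_on_compact Q C hQbdd hQconv hKc (half_pos hε)] with n hn
    have hMle : M n ≤ ε / 2 := by
      apply Real.sSup_le _ (by positivity)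
      rintro x ⟨y, hy, rfl⟩
      exact (hn y hy).le
    rw [Real.norm_eq_abs, abs_of_nonneg (hM_nonneg n)]
    linarith
  refine ⟨fun n => Real.sqrt (2 * ‖ι‖ * M n / r), ?_, ?_⟩
  · have h1 : Tendsto (fun n => 2 * ‖ι‖ * M n / r) atTop (𝓝 0) := by
      have := (hM0.const_mul (2 * ‖ι‖)).div_const r
      simpa using this
    have := (Real.continuous_sqrt.tendsto 0).comp h1
    simpa [Function.comp_def] using this
  · intro n u hu horth
    rcases eq_or_ne u 0 with rfl | hu0
    · simp
    set y := P (ι u) with hydef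
    set w := ι u - P (ι u) with hwdef
    have hwW : w ∈ W := (hP (ι u)).2
    have hyWp : y ∈ Wᗮ := (hP (ι u)).1
    -- key identity: ‖w‖² = ⟪ι u, Q n y - y⟫
    have hQw : Q n w = ι u - Q n y := by
      have h1 : Q n (ι u) = ι u := hQfix n (ι u) ⟨u, hu, rfl⟩
      rw [hwdef, map_sub, h1]
    have horthQ : ⟪ι u, Q n w⟫ = 0 := by
      obtain ⟨v, hv, hvw⟩ := hQW n w hwW
      rw [← hvw]
      exact horth v hv
    have hinner1 : ⟪ι u, w⟫ = ‖w‖ ^ 2 := by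
      have hdecomp : ι u = w + y := by rw [hwdef]; abel
      have hyw : ⟪y, w⟫ = 0 := by
        rw [real_inner_comm]
        exact (Submodule.mem_orthogonal W y).mp hyWp w hwW
      rw [hdecomp, inner_add_left, hyw, real_inner_self_eq_norm_sq]
      ring
    have hkey : ‖w‖ ^ 2 = ⟪ι u, Q n y - y⟫ := by
      have h1 : ⟪ι u, w - Q n w⟫ = ⟪ι u, w⟫ - ⟪ι u, Q n w⟫ := inner_sub_right _ _ _
      have h2 : w - Q n w = Q n y - y := by rw [hwdef, hQw]; abel
      rw [← h2, h1, horthQ, hinner1, sub_zero]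
    have hCS : ‖w‖ ^ 2 ≤ ‖ι u‖ * ‖y - Q n y‖ := by
      rw [hkey]
      calc ⟪ι u, Q n y - y⟫ ≤ |⟪ι u, Q n y - y⟫| := le_abs_self _
        _ ≤ ‖ι u‖ * ‖Q n y - y‖ := abs_real_inner_le_norm _ _
        _ = ‖ι u‖ * ‖y - Q n y‖ := by rw [norm_sub_rev]
    -- scale to get into K
    have hu0' : 0 < ‖u‖ := norm_pos_iff.mpr hu0
    set c : ℝ := r / (2 * ‖u‖) with hcdef
    have hc : 0 < c := by positivity
    have hcu : c • u ∈ Metric.ball (0 : Xm) r := by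
      rw [Metric.mem_ball, dist_zero_right, norm_smul, Real.norm_eq_abs, abs_of_pos hc,
        hcdef, div_mul_eq_mul_div, mul_comm]
      rw [div_lt_iff₀ (by positivity)]
      nlinarith
    have hcK : c • y ∈ K := by
      have := hball hcu
      simpa [hydef] using this
    have hyQ : ‖y - Q n y‖ ≤ M n / c := by
      have h1 : ‖c • y - Q n (c • y)‖ ≤ M n := hM_le n _ hcK
      have h2 : c • y - Q n (c • y) = c • (y - Q n y) := by
        rw [map_smul, smul_sub]
      rw [h2, norm_smul, Real.norm_eq_abs, abs_of_pos hc] at h1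
      rw [le_div_iff₀ hc, mul_comm]
      exact h1
    have hιu : ‖ι u‖ ≤ ‖ι‖ * ‖u‖ := ι.le_opNorm u
    have hfinal : ‖w‖ ^ 2 ≤ (2 * ‖ι‖ * M n / r) * ‖u‖ ^ 2 := by
      have h2 : ‖ι u‖ * ‖y - Q n y‖ ≤ (‖ι‖ * ‖u‖) * (M n / c) :=
        mul_le_mul hιu hyQ (norm_nonneg _) (by positivity)
      have h3 : (‖ι‖ * ‖u‖) * (M n / c) = (2 * ‖ι‖ * M n / r) * ‖u‖ ^ 2 := by
        rw [hcdef]; field_simp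
      linarith [hCS]
    have hb : 0 ≤ 2 * ‖ι‖ * M n / r :=
      div_nonneg (mul_nonneg (by positivity) (hM_nonneg n)) hr.le
    have := Real.sqrt_le_sqrt hfinal
    rw [Real.sqrt_mul hb, Real.sqrt_sq (norm_nonneg u)] at this
    calc ‖w‖ = Real.sqrt (‖w‖ ^ 2) := (Real.sqrt_sq (norm_nonneg w)).symm
      _ ≤ Real.sqrt (2 * ‖ι‖ * M n / r) * ‖u‖ := this
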